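/- Let (x_n)_{n∈I} be a frame, (z_n)_{n∈I} a dual frame, and E = {1,...,k} satisfying the MRC. Suppose the iterative procedure (as in Theorem on the non-canonical case) is well defined through step k. Then the k×k matrix A_{X,Z,E} with entries (A)_{mi} = ⟨z_i, x_m⟩ − δ_{mi} is invertible, and the sequence v_n = z_n − Σ_{i=1}^k α_{ni} z_i with (α_{n1},...,α_{nk})^T = A_{X,Z,E}⁻¹(⟨z_n,x_1⟩,...,⟨z_n,x_k⟩)^T is a dual frame of (x_n)_{n∈E^c}. -/

import Mathlib

noncomputable section

variable {H : Type*} [NormedAddCommGroup H] [InnerProductSpace ℂ H] [CompleteSpace H]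

/-- `(x n)_{n ∈ I}` is a frame for `H` with frame bounds `A`, `B`. -/
def IsFrameOn (x : ℕ → H) (I : Set ℕ) (A B : ℝ) : Prop :=
  0 < A ∧ 0 < B ∧ ∀ h : H,
    Summable (fun n : I => ‖(inner ℂ (x n) h : ℂ)‖ ^ 2) ∧
    A * ‖h‖ ^ 2 ≤ ∑' n : I, ‖(inner ℂ (x n) h : ℂ)‖ ^ 2 ∧
    ∑' n : I, ‖(inner ℂ (x n) h : ℂ)‖ ^ 2 ≤ B * ‖h‖ ^ 2

/-- `(z n)_{n ∈ I}` is a dual frame of `(x n)_{n ∈ I}`. -/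
def IsDualFrameOn (z x : ℕ → H) (I : Set ℕ) : Prop :=
  (∃ A B : ℝ, IsFrameOn z I A B) ∧
  ∀ h : H, HasSum (fun n : I => (inner ℂ (x n) h : ℂ) • z n) h

lemma sum_Icc_one' {Mo : Type*} [AddCommMonoid Mo] (k : ℕ) (F : ℕ → Mo) :
    ∑ m ∈ Finset.Icc 1 k, F m = ∑ i : Fin k, F (i+1) := by
  rw [show (∑ i : Fin k, F (i+1)) = ∑ i ∈ Finset.range k, F (i+1) from
    Fin.sum_univ_eq_sum_range (fun i => F (i+1)) k]
  induction k with
  | zero => simp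
  | succ n ih => rw [Finset.sum_Icc_succ_top (by omega), ih, Finset.sum_range_succ]

lemma cs_tsum' {ι : Type*} (a b : ι → ℝ) (ha0 : ∀ i, 0 ≤ a i) (hb0 : ∀ i, 0 ≤ b i)
    (ha : Summable (fun i => a i ^ 2)) (hb : Summable (fun i => b i ^ 2)) :
    Summable (fun i => a i * b i) ∧
    ∑' i, a i * b i ≤ Real.sqrt (∑' i, a i ^ 2) * Real.sqrt (∑' i, b i ^ 2) := by
  have hs : Summable (fun i => a i * b i) := by
    refine Summable.of_nonneg_of_le (fun i => mul_nonneg (ha0 i) (hb0 i))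
      (fun i => ?_) ((ha.add hb).div_const 2)
    nlinarith [sq_nonneg (a i - b i)]
  refine ⟨hs, Summable.tsum_le_of_sum_le hs fun s => ?_⟩
  have h1 : (∑ i ∈ s, a i * b i)^2 ≤ (∑ i ∈ s, a i^2) * (∑ i ∈ s, b i^2) :=
    Finset.sum_mul_sq_le_sq_mul_sq s a b
  have h2 : ∑ i ∈ s, a i ^2 ≤ ∑' i, a i^2 := Summable.sum_le_tsum s (fun i _ => sq_nonneg _) ha
  have h3 : ∑ i ∈ s, b i ^2 ≤ ∑' i, b i^2 := Summable.sum_le_tsum s (fun i _ => sq_nonneg _) hb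
  have h4 : 0 ≤ ∑ i ∈ s, a i * b i := Finset.sum_nonneg fun i _ => mul_nonneg (ha0 i) (hb0 i)
  have h5 : 0 ≤ ∑ i ∈ s, a i ^ 2 := Finset.sum_nonneg fun i _ => sq_nonneg _
  have h6 : 0 ≤ ∑ i ∈ s, b i ^ 2 := Finset.sum_nonneg fun i _ => sq_nonneg _
  calc ∑ i ∈ s, a i * b i = Real.sqrt ((∑ i ∈ s, a i * b i)^2) := (Real.sqrt_sq h4).symm
    _ ≤ Real.sqrt ((∑ i ∈ s, a i^2) * (∑ i ∈ s, b i^2)) := Real.sqrt_le_sqrt h1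
    _ = Real.sqrt (∑ i ∈ s, a i^2) * Real.sqrt (∑ i ∈ s, b i^2) := Real.sqrt_mul h5 _
    _ ≤ _ := mul_le_mul (Real.sqrt_le_sqrt h2) (Real.sqrt_le_sqrt h3) (Real.sqrt_nonneg _)
        (Real.sqrt_nonneg _)

set_option maxHeartbeats 2000000 in
/-- If the iterative procedure starting from a dual frame `z` is well defined through
step `k`, then the `k×k` matrix `A_{X,Z,E}` with entries `⟨z i, x m⟩ − δ_{m i}` is
invertible and `v n = z n − Σ_{i=1}^k α_{n i} z i` with
`(α_{n 1},…,α_{n k})ᵀ = A_{X,Z,E}⁻¹ (⟨z n, x 1⟩,…,⟨z n, x k⟩)ᵀ` is a dual frame of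
`(x n)_{n ∈ I \ E}`, where `E = {1,…,k}`. -/
theorem stmt12 (x z : ℕ → H) (I : Set ℕ) (A B : ℝ) (hx : IsFrameOn x I A B)
    (hz : IsDualFrameOn z x I) (k : ℕ)
    (hE : ((Finset.Icc 1 k : Finset ℕ) : Set ℕ) ⊂ I)
    (hMRC : Dense ((Submodule.span ℂ
      (x '' (I \ (Finset.Icc 1 k : Finset ℕ))) : Submodule ℂ H) : Set H))
    (v : ℕ → ℕ → H) (hv0 : ∀ n, v 0 n = z n)
    (hden : ∀ j ∈ Finset.Icc 1 k, (inner ℂ (x j) (v (j - 1) j) : ℂ) ≠ 1)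
    (hrec : ∀ j ∈ Finset.Icc 1 k, ∀ n ∈ I \ ((Finset.Icc 1 j : Finset ℕ) : Set ℕ),
      v j n = v (j - 1) n +
        ((inner ℂ (x j) (v (j - 1) n) : ℂ) / (1 - (inner ℂ (x j) (v (j - 1) j) : ℂ))) •
          v (j - 1) j)
    (M : Matrix (Fin k) (Fin k) ℂ)
    (hM : ∀ m i : Fin k,
      M m i = (inner ℂ (x ((m : ℕ) + 1)) (z ((i : ℕ) + 1)) : ℂ) - if m = i then 1 else 0)
    (α : ℕ → Fin k → ℂ)
    (hα : ∀ n : ℕ,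
      α n = Matrix.mulVec M⁻¹ (fun m : Fin k => (inner ℂ (x ((m : ℕ) + 1)) (z n) : ℂ))) :
    IsUnit M ∧
    IsDualFrameOn (fun n => z n - ∑ i : Fin k, α n i • z ((i : ℕ) + 1)) x
      (I \ ((Finset.Icc 1 k : Finset ℕ) : Set ℕ)) := by
  have hEI : ((Finset.Icc 1 k : Finset ℕ) : Set ℕ) ⊆ I := hE.subset
  have hunit : IsUnit M := by
    rw [Matrix.isUnit_iff_isUnit_det, isUnit_iff_ne_zero]
    intro hd
    obtain ⟨c, hc, hc0⟩ := Matrix.exists_mulVec_eq_zero_iff.2 hd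
    set u : H := ∑ i : Fin k, c i • z (i+1) with hu
    have hxu : ∀ m : Fin k, (inner ℂ (x ((m:ℕ)+1)) u : ℂ) = c m := by
      intro m
      have h0 : ∑ i, M m i * c i = 0 := congrFun hc0 m
      have h1 : (inner ℂ (x ((m:ℕ)+1)) u : ℂ)
          = ∑ i : Fin k, c i * (inner ℂ (x ((m:ℕ)+1)) (z (i+1)) : ℂ) := by
        simp [hu, inner_sum, inner_smul_right]
      have h2 : ∀ i : Fin k, c i * (inner ℂ (x ((m:ℕ)+1)) (z (i+1)) : ℂ)
          = M m i * c i + (if m = i then c i else 0) := by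
        intro i; rw [hM m i]; by_cases h : m = i <;> simp [h] <;> ring
      rw [h1, Finset.sum_congr rfl fun i _ => h2 i, Finset.sum_add_distrib, h0,
        Finset.sum_ite_eq]
      simp
    have key : ∀ j, j ≤ k → u = ∑ m ∈ Finset.Icc (j+1) k, (inner ℂ (x m) u : ℂ) • v j m := by
      intro j
      induction j with
      | zero =>
        intro _
        rw [show (0:ℕ)+1 = 1 from rfl, sum_Icc_one' k (fun m => (inner ℂ (x m) u : ℂ) • v 0 m)]
        simp only [hv0]
        rw [hu]
        exact Finset.sum_congr rfl fun i _ => by rw [hxu i]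
      | succ j ih =>
        intro hjk
        have hj := ih (Nat.le_of_succ_le hjk)
        set t : ℂ := (inner ℂ (x (j+1)) (v j (j+1)) : ℂ) with ht
        have hmem : (j+1) ∈ Finset.Icc 1 k := by simp; omega
        have ht1 : t ≠ 1 := by simpa using hden (j+1) hmem
        have ht0 : (1 : ℂ) - t ≠ 0 := sub_ne_zero_of_ne (Ne.symm ht1)
        have hsplit : Finset.Icc (j+1) k = insert (j+1) (Finset.Icc (j+2) k) := by
          ext n; simp; omega
        rw [hsplit, Finset.sum_insert (by simp)] at hj
        have hA : (inner ℂ (x (j+1)) u : ℂ)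
            = (inner ℂ (x (j+1)) u : ℂ) * t
              + ∑ m ∈ Finset.Icc (j+2) k,
                  (inner ℂ (x m) u : ℂ) * (inner ℂ (x (j+1)) (v j m) : ℂ) := by
          conv_lhs => rw [hj]
          simp [inner_add_right, inner_smul_right, inner_sum, ht, mul_comm]
        have hB : ∑ m ∈ Finset.Icc (j+2) k,
            (inner ℂ (x m) u : ℂ) * ((inner ℂ (x (j+1)) (v j m) : ℂ) / (1 - t))
            = (inner ℂ (x (j+1)) u : ℂ) := by
          have hsum : ∑ m ∈ Finset.Icc (j+2) k,
              (inner ℂ (x m) u : ℂ) * (inner ℂ (x (j+1)) (v j m) : ℂ)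
              = (inner ℂ (x (j+1)) u : ℂ) * (1 - t) := by
            rw [mul_sub, mul_one]; linear_combination -hA
          have e1 : ∑ m ∈ Finset.Icc (j+2) k,
              (inner ℂ (x m) u : ℂ) * ((inner ℂ (x (j+1)) (v j m) : ℂ) / (1 - t))
              = (∑ m ∈ Finset.Icc (j+2) k,
                (inner ℂ (x m) u : ℂ) * (inner ℂ (x (j+1)) (v j m) : ℂ)) / (1 - t) := by
            rw [Finset.sum_div]
            exact Finset.sum_congr rfl fun m _ => (mul_div_assoc _ _ _).symm
          rw [e1, hsum, mul_div_cancel_right₀ _ ht0]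
        have hvrec : ∀ m ∈ Finset.Icc (j+2) k,
            v (j+1) m = v j m + ((inner ℂ (x (j+1)) (v j m) : ℂ) / (1 - t)) • v j (j+1) := by
          intro m hm
          simp only [Finset.mem_Icc] at hm
          have := hrec (j+1) hmem m (by
            constructor
            · exact hEI (by simp; omega)
            · simp; omega)
          simpa using this
        have step1 : u = (∑ m ∈ Finset.Icc (j+2) k, (inner ℂ (x m) u : ℂ) • v j m)
              + (∑ m ∈ Finset.Icc (j+2) k,
                  (inner ℂ (x m) u : ℂ) * ((inner ℂ (x (j+1)) (v j m) : ℂ) / (1 - t))) •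
                    v j (j+1) := by
          rw [hB]
          exact hj.trans (add_comm _ _)
        have step2 : (∑ m ∈ Finset.Icc (j+2) k, (inner ℂ (x m) u : ℂ) • v j m)
              + (∑ m ∈ Finset.Icc (j+2) k,
                  (inner ℂ (x m) u : ℂ) * ((inner ℂ (x (j+1)) (v j m) : ℂ) / (1 - t))) •
                    v j (j+1)
            = ∑ m ∈ Finset.Icc (j+2) k, (inner ℂ (x m) u : ℂ) • v (j+1) m := by
          rw [Finset.sum_smul, ← Finset.sum_add_distrib]
          refine Finset.sum_congr rfl fun m hm => ?_
          rw [hvrec m hm, smul_add, smul_smul]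
        rw [show j+1+1 = j+2 from rfl]
        exact step1.trans step2
    have hu0 : u = 0 := by
      have h := key k le_rfl
      rwa [Finset.Icc_eq_empty (by omega), Finset.sum_empty] at h
    refine hc (funext fun m => ?_)
    have := hxu m
    rw [hu0, inner_zero_right] at this
    exact this.symm
  obtain ⟨hzAB, hz2⟩ := hz
  obtain ⟨Az, Bz, hAz, hBz, hzf⟩ := hzAB
  obtain ⟨hA, hB, hxf⟩ := hx
  have hMdet : IsUnit M.det := (Matrix.isUnit_iff_isUnit_det M).1 hunit
  set Ec : Set ℕ := I \ ((Finset.Icc 1 k : Finset ℕ) : Set ℕ) with hEc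
  set w : ℕ → H := fun n => z n - ∑ i : Fin k, α n i • z ((i:ℕ)+1) with hw
  -- Step A : reconstruction with w over Ec
  have keysum : ∀ h : H, HasSum (fun n : Ec => (inner ℂ (x n) h : ℂ) • w n) h := by
    intro h
    set f : ℕ → H := fun n => (inner ℂ (x n) h : ℂ) • z n with hf
    have h1 : HasSum (Set.indicator I f) h := hasSum_subtype_iff_indicator.1 (hz2 h)
    have h2 : HasSum (Set.indicator ((Finset.Icc 1 k : Finset ℕ) : Set ℕ) f)
        (∑ m ∈ Finset.Icc 1 k, f m) := by
      have hz0 : ∀ b ∉ Finset.Icc 1 k,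
          Set.indicator ((Finset.Icc 1 k : Finset ℕ) : Set ℕ) f b = 0 := fun b hb =>
        Set.indicator_of_notMem (by simpa using hb) f
      have hs : HasSum _ _ := hasSum_sum_of_ne_finset_zero hz0
      rwa [Finset.sum_congr rfl
        (fun m hm => Set.indicator_of_mem (by simpa using hm) f)] at hs
    have h3 : HasSum (Set.indicator Ec f) (h - ∑ m ∈ Finset.Icc 1 k, f m) := by
      rw [hEc, Set.indicator_sdiff hEI]
      exact h1.sub h2
    set d : Fin k → ℂ := fun i => (inner ℂ (x ((i:ℕ)+1)) h : ℂ) with hd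
    have hg : ∀ m : Fin k, HasSum (Set.indicator Ec
        (fun n => (inner ℂ (x n) h : ℂ) * (inner ℂ (x ((m:ℕ)+1)) (z n) : ℂ)))
        (-(M.mulVec d m)) := by
      intro m
      have hm1 := h3.mapL (innerSL ℂ (x ((m:ℕ)+1)))
      have e1 : (fun n => (innerSL ℂ (x ((m:ℕ)+1))) (Set.indicator Ec f n))
          = Set.indicator Ec
            (fun n => (inner ℂ (x n) h : ℂ) * (inner ℂ (x ((m:ℕ)+1)) (z n) : ℂ)) := by
        funext n
        by_cases hn : n ∈ Ec
        · simp only [Set.indicator_of_mem hn, hf, innerSL_apply_apply, inner_smul_right]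
        · simp [Set.indicator_of_notMem hn]
      have e2 : (innerSL ℂ (x ((m:ℕ)+1))) (h - ∑ q ∈ Finset.Icc 1 k, f q)
          = -(M.mulVec d m) := by
        simp only [innerSL_apply_apply, inner_sub_right]
        rw [show (inner ℂ (x ((m:ℕ)+1)) (∑ q ∈ Finset.Icc 1 k, f q) : ℂ)
            = ∑ q ∈ Finset.Icc 1 k,
                (inner ℂ (x q) h : ℂ) * (inner ℂ (x ((m:ℕ)+1)) (z q) : ℂ) by
          rw [inner_sum]
          exact Finset.sum_congr rfl fun q _ => by simp [hf, inner_smul_right]]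
        rw [sum_Icc_one' k
          (fun q => (inner ℂ (x q) h : ℂ) * (inner ℂ (x ((m:ℕ)+1)) (z q) : ℂ))]
        have hMi : ∀ i : Fin k, M m i * d i
            = (inner ℂ (x ((i:ℕ)+1)) h : ℂ) * (inner ℂ (x ((m:ℕ)+1)) (z ((i:ℕ)+1)) : ℂ)
              - (if m = i then d i else 0) := by
          intro i
          rw [hM]
          by_cases h' : m = i
          · subst h'; simp [hd]; ring
          · simp [h', hd]; ring
        rw [show M.mulVec d m = ∑ i : Fin k, M m i * d i from rfl]
        rw [Finset.sum_congr rfl fun i _ => hMi i, Finset.sum_sub_distrib,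
          Finset.sum_ite_eq]
        simp only [Finset.mem_univ, if_true, hd]
        ring
      rw [e1, e2] at hm1
      exact hm1
    have hαs : ∀ i : Fin k, HasSum (Set.indicator Ec
        (fun n => (inner ℂ (x n) h : ℂ) * α n i)) (-(d i)) := by
      intro i
      have hsum := hasSum_sum (s := (Finset.univ : Finset (Fin k)))
        (f := fun m (n : ℕ) => M⁻¹ i m * Set.indicator Ec
          (fun n => (inner ℂ (x n) h : ℂ) * (inner ℂ (x ((m:ℕ)+1)) (z n) : ℂ)) n)
        (a := fun m => M⁻¹ i m * (-(M.mulVec d m)))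
        (fun m _ => (hg m).mul_left (M⁻¹ i m))
      have e1 : (fun n => ∑ m : Fin k, M⁻¹ i m * Set.indicator Ec
          (fun n => (inner ℂ (x n) h : ℂ) * (inner ℂ (x ((m:ℕ)+1)) (z n) : ℂ)) n)
          = Set.indicator Ec (fun n => (inner ℂ (x n) h : ℂ) * α n i) := by
        funext n
        by_cases hn : n ∈ Ec
        · simp only [Set.indicator_of_mem hn]
          rw [hα n]
          simp only [Matrix.mulVec, dotProduct, Finset.mul_sum]
          exact Finset.sum_congr rfl fun m _ => by ring
        · simp [Set.indicator_of_notMem hn]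
      have e2 : ∑ m : Fin k, M⁻¹ i m * (-(M.mulVec d m)) = -(d i) := by
        have hinv : M⁻¹.mulVec (M.mulVec d) = d := by
          rw [Matrix.mulVec_mulVec, Matrix.nonsing_inv_mul M hMdet, Matrix.one_mulVec]
        calc ∑ m : Fin k, M⁻¹ i m * (-(M.mulVec d m))
            = -(∑ m : Fin k, M⁻¹ i m * M.mulVec d m) := by
              rw [← Finset.sum_neg_distrib]
              exact Finset.sum_congr rfl fun m _ => (mul_neg _ _)
          _ = -(M⁻¹.mulVec (M.mulVec d) i) := rfl
          _ = -(d i) := by rw [hinv]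
      rw [e1, e2] at hsum
      exact hsum
    have h7 : ∀ i : Fin k, HasSum (Set.indicator Ec
        (fun n => ((inner ℂ (x n) h : ℂ) * α n i) • z ((i:ℕ)+1)))
        ((-(d i)) • z ((i:ℕ)+1)) := by
      intro i
      have := (hαs i).smul_const (z ((i:ℕ)+1))
      have e1 : (fun n => Set.indicator Ec
          (fun n => (inner ℂ (x n) h : ℂ) * α n i) n • z ((i:ℕ)+1))
          = Set.indicator Ec (fun n => ((inner ℂ (x n) h : ℂ) * α n i) • z ((i:ℕ)+1)) := by
        funext n
        by_cases hn : n ∈ Ec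
        · simp [Set.indicator_of_mem hn]
        · simp [Set.indicator_of_notMem hn]
      rwa [e1] at this
    have h8 : HasSum (Set.indicator Ec (fun n => (inner ℂ (x n) h : ℂ) • w n)) h := by
      have hsum2 := hasSum_sum (s := (Finset.univ : Finset (Fin k)))
        (f := fun i (n : ℕ) => Set.indicator Ec
          (fun n => ((inner ℂ (x n) h : ℂ) * α n i) • z ((i:ℕ)+1)) n)
        (a := fun i => (-(d i)) • z ((i:ℕ)+1)) (fun i _ => h7 i)
      have htot := h3.sub hsum2
      have e1 : (fun n => Set.indicator Ec f n - ∑ i : Fin k, Set.indicator Ec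
          (fun n => ((inner ℂ (x n) h : ℂ) * α n i) • z ((i:ℕ)+1)) n)
          = Set.indicator Ec (fun n => (inner ℂ (x n) h : ℂ) • w n) := by
        funext n
        by_cases hn : n ∈ Ec
        · simp only [Set.indicator_of_mem hn, hf, hw, smul_sub, smul_smul,
            Finset.smul_sum]
        · simp [Set.indicator_of_notMem hn]
      have e2 : (h - ∑ m ∈ Finset.Icc 1 k, f m)
          - ∑ i : Fin k, (-(d i)) • z ((i:ℕ)+1) = h := by
        rw [sum_Icc_one' k f]
        simp only [hf, hd, neg_smul, Finset.sum_neg_distrib, sub_neg_eq_add]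
        abel
      rw [e1, e2] at htot
      exact htot
    exact hasSum_subtype_iff_indicator.2 h8
  -- Step B : frame bounds
  set C : ℝ := ∑ i : Fin k, ∑ m : Fin k,
      ‖M⁻¹ i m‖ * (‖z ((i:ℕ)+1)‖ * ‖x ((m:ℕ)+1)‖) with hC
  have hC0 : 0 ≤ C :=
    Finset.sum_nonneg fun i _ => Finset.sum_nonneg fun m _ => by positivity
  set g : H → H := fun h => ∑ i : Fin k, ∑ m : Fin k,
      ((starRingEnd ℂ) (M⁻¹ i m) * (inner ℂ (z ((i:ℕ)+1)) h : ℂ)) • x ((m:ℕ)+1) with hgdef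
  have hwinner : ∀ (n : ℕ) (h : H), (inner ℂ (w n) h : ℂ) = (inner ℂ (z n) (h - g h) : ℂ) := by
    intro n h
    simp only [hw, inner_sub_left, inner_sub_right, sum_inner, inner_smul_left]
    congr 1
    rw [hgdef]
    simp only [inner_sum, inner_smul_right]
    refine Finset.sum_congr rfl fun i _ => ?_
    rw [hα n]
    simp only [Matrix.mulVec, dotProduct, map_sum, map_mul, Finset.sum_mul]
    refine Finset.sum_congr rfl fun m _ => ?_
    rw [inner_conj_symm]
    ring
  have hgbound : ∀ h : H, ‖h - g h‖ ≤ (1 + C) * ‖h‖ := by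
    intro h
    have hgh : ‖g h‖ ≤ C * ‖h‖ := by
      rw [hgdef, hC]
      calc ‖∑ i : Fin k, ∑ m : Fin k,
          ((starRingEnd ℂ) (M⁻¹ i m) * (inner ℂ (z ((i:ℕ)+1)) h : ℂ)) • x ((m:ℕ)+1)‖
          ≤ ∑ i : Fin k, ‖∑ m : Fin k,
            ((starRingEnd ℂ) (M⁻¹ i m) * (inner ℂ (z ((i:ℕ)+1)) h : ℂ)) • x ((m:ℕ)+1)‖ :=
            norm_sum_le _ _
        _ ≤ ∑ i : Fin k, ∑ m : Fin k,
            ‖((starRingEnd ℂ) (M⁻¹ i m) * (inner ℂ (z ((i:ℕ)+1)) h : ℂ)) • x ((m:ℕ)+1)‖ :=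
            Finset.sum_le_sum fun i _ => norm_sum_le _ _
        _ ≤ ∑ i : Fin k, ∑ m : Fin k,
            (‖M⁻¹ i m‖ * (‖z ((i:ℕ)+1)‖ * ‖x ((m:ℕ)+1)‖)) * ‖h‖ := by
            refine Finset.sum_le_sum fun i _ => Finset.sum_le_sum fun m _ => ?_
            rw [norm_smul, norm_mul, RCLike.norm_conj]
            calc ‖M⁻¹ i m‖ * ‖(inner ℂ (z ((i:ℕ)+1)) h : ℂ)‖ * ‖x ((m:ℕ)+1)‖
                ≤ ‖M⁻¹ i m‖ * (‖z ((i:ℕ)+1)‖ * ‖h‖) * ‖x ((m:ℕ)+1)‖ := by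
                  have := norm_inner_le_norm (𝕜 := ℂ) (z ((i:ℕ)+1)) h
                  gcongr
              _ = (‖M⁻¹ i m‖ * (‖z ((i:ℕ)+1)‖ * ‖x ((m:ℕ)+1)‖)) * ‖h‖ := by ring
        _ = (∑ i : Fin k, ∑ m : Fin k,
            ‖M⁻¹ i m‖ * (‖z ((i:ℕ)+1)‖ * ‖x ((m:ℕ)+1)‖)) * ‖h‖ := by
            rw [Finset.sum_mul]
            exact Finset.sum_congr rfl fun i _ => by rw [Finset.sum_mul]
    calc ‖h - g h‖ ≤ ‖h‖ + ‖g h‖ := norm_sub_le _ _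
      _ ≤ ‖h‖ + C * ‖h‖ := by linarith
      _ = (1 + C) * ‖h‖ := by ring
  have hupper : ∀ h : H, Summable (fun n : Ec => ‖(inner ℂ (w n) h : ℂ)‖^2) ∧
      ∑' n : Ec, ‖(inner ℂ (w n) h : ℂ)‖^2 ≤ (Bz * (1+C)^2) * ‖h‖^2 := by
    intro h
    set q : ℕ → ℝ := fun n => ‖(inner ℂ (z n) (h - g h) : ℂ)‖^2 with hq
    obtain ⟨hqs, -, hqB⟩ := hzf (h - g h)
    have hqi : Summable (Set.indicator I q) := summable_subtype_iff_indicator.1 hqs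
    have hle : ∀ n, Set.indicator Ec q n ≤ Set.indicator I q n := fun n =>
      Set.indicator_le_indicator_of_subset Set.diff_subset (fun a => by positivity) n
    have hEcq : Summable (Set.indicator Ec q) :=
      Summable.of_nonneg_of_le (fun n => Set.indicator_nonneg (fun a _ => by positivity) n)
        hle hqi
    have hsub : Summable (fun n : Ec => q n) := summable_subtype_iff_indicator.2 hEcq
    have heq : (fun n : Ec => ‖(inner ℂ (w n) h : ℂ)‖^2) = fun n : Ec => q n := by
      funext n; rw [hq, hwinner]
    constructor
    · rw [heq]; exact hsub
    · rw [heq]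
      have e1 : ∑' n : Ec, q n ≤ ∑' n : I, q n := by
        rw [tsum_subtype Ec q, tsum_subtype I q]
        exact Summable.tsum_le_tsum hle hEcq hqi
      have e2 : ∑' n : I, q n ≤ Bz * ‖h - g h‖^2 := hqB
      have e3 : Bz * ‖h - g h‖^2 ≤ Bz * ((1+C) * ‖h‖)^2 := by
        have := hgbound h
        have h2 : ‖h - g h‖^2 ≤ ((1+C) * ‖h‖)^2 := by
          apply pow_le_pow_left₀ (norm_nonneg _) this
        nlinarith
      calc ∑' n : Ec, q n ≤ Bz * ((1+C) * ‖h‖)^2 := le_trans e1 (le_trans e2 e3)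
        _ = (Bz * (1+C)^2) * ‖h‖^2 := by ring
  have hlower : ∀ h : H, B⁻¹ * ‖h‖^2 ≤ ∑' n : Ec, ‖(inner ℂ (w n) h : ℂ)‖^2 := by
    intro h
    set S : ℝ := ∑' n : Ec, ‖(inner ℂ (w n) h : ℂ)‖^2 with hS
    have hS0 : 0 ≤ S := tsum_nonneg fun n => by positivity
    have hwsum : Summable (fun n : Ec => ‖(inner ℂ (w n) h : ℂ)‖^2) := (hupper h).1
    -- summability of x-frame coefficients on Ec
    set qx : ℕ → ℝ := fun n => ‖(inner ℂ (x n) h : ℂ)‖^2 with hqx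
    obtain ⟨hxs, -, hxB⟩ := hxf h
    have hxi : Summable (Set.indicator I qx) := summable_subtype_iff_indicator.1 hxs
    have hlex : ∀ n, Set.indicator Ec qx n ≤ Set.indicator I qx n := fun n =>
      Set.indicator_le_indicator_of_subset Set.diff_subset
        (fun a => by rw [hqx]; positivity) n
    have hxEc : Summable (Set.indicator Ec qx) :=
      Summable.of_nonneg_of_le
        (fun n => Set.indicator_nonneg (fun a _ => by rw [hqx]; positivity) n) hlex hxi
    have hxsub : Summable (fun n : Ec => qx n) := summable_subtype_iff_indicator.2 hxEc
    have hP : ∑' n : Ec, qx n ≤ B * ‖h‖^2 := by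
      have e1 : ∑' n : Ec, qx n ≤ ∑' n : I, qx n := by
        rw [tsum_subtype Ec qx, tsum_subtype I qx]
        exact Summable.tsum_le_tsum hlex hxEc hxi
      exact le_trans e1 hxB
    -- Cauchy-Schwarz setup
    have hcs := cs_tsum' (fun n : Ec => ‖(inner ℂ (x n) h : ℂ)‖)
      (fun n : Ec => ‖(inner ℂ (w n) h : ℂ)‖)
      (fun n => norm_nonneg _) (fun n => norm_nonneg _) hxsub hwsum
    -- the reconstruction identity
    have h2 : HasSum (fun n : Ec => (inner ℂ (x n) h : ℂ) * (inner ℂ h (w n) : ℂ))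
        ((inner ℂ h h : ℂ)) := by
      have := (keysum h).mapL (innerSL ℂ h)
      simpa [inner_smul_right] using this
    have hnorm1 : ‖(inner ℂ h h : ℂ)‖ = ‖h‖^2 := by
      rw [inner_self_eq_norm_sq_to_K]
      simp
    have hsummn : Summable (fun n : Ec =>
        ‖(inner ℂ (x n) h : ℂ) * (inner ℂ h (w n) : ℂ)‖) := by
      have := hcs.1
      refine this.congr fun n => ?_
      rw [norm_mul, norm_inner_symm h (w n)]
    have hnb : ‖h‖^2 ≤ ∑' n : Ec, ‖(inner ℂ (x n) h : ℂ)‖ * ‖(inner ℂ (w n) h : ℂ)‖ := by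
      rw [← hnorm1, ← h2.tsum_eq]
      calc ‖∑' n : Ec, (inner ℂ (x n) h : ℂ) * (inner ℂ h (w n) : ℂ)‖
          ≤ ∑' n : Ec, ‖(inner ℂ (x n) h : ℂ) * (inner ℂ h (w n) : ℂ)‖ :=
            norm_tsum_le_tsum_norm hsummn
        _ = ∑' n : Ec, ‖(inner ℂ (x n) h : ℂ)‖ * ‖(inner ℂ (w n) h : ℂ)‖ := by
            refine tsum_congr fun n => ?_
            rw [norm_mul, norm_inner_symm h (w n)]
    have hsq1 : Real.sqrt (∑' n : Ec, ‖(inner ℂ (x n) h : ℂ)‖^2)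
        ≤ Real.sqrt (B * ‖h‖^2) := Real.sqrt_le_sqrt hP
    have hmain : ‖h‖^2 ≤ Real.sqrt (B * ‖h‖^2) * Real.sqrt S := by
      calc ‖h‖^2 ≤ ∑' n : Ec, ‖(inner ℂ (x n) h : ℂ)‖ * ‖(inner ℂ (w n) h : ℂ)‖ := hnb
        _ ≤ Real.sqrt (∑' n : Ec, ‖(inner ℂ (x n) h : ℂ)‖^2)
            * Real.sqrt (∑' n : Ec, ‖(inner ℂ (w n) h : ℂ)‖^2) := hcs.2
        _ ≤ Real.sqrt (B * ‖h‖^2) * Real.sqrt S := by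
            refine mul_le_mul hsq1 ?_ (Real.sqrt_nonneg _) (Real.sqrt_nonneg _)
            exact le_of_eq rfl
    have hbs : Real.sqrt (B * ‖h‖^2) = Real.sqrt B * ‖h‖ := by
      rw [Real.sqrt_mul hB.le, Real.sqrt_sq (norm_nonneg _)]
    rw [hbs] at hmain
    have hsqB : Real.sqrt B ^ 2 = B := Real.sq_sqrt hB.le
    have hsqS : Real.sqrt S ^ 2 = S := Real.sq_sqrt hS0
    have hsB0 : 0 ≤ Real.sqrt B := Real.sqrt_nonneg _
    have hsS0 : 0 ≤ Real.sqrt S := Real.sqrt_nonneg _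
    have hBpos := hB
    rw [inv_mul_le_iff₀ hB]
    nlinarith [norm_nonneg h, sq_nonneg (Real.sqrt B * Real.sqrt S - ‖h‖)]
  refine ⟨hunit, ⟨⟨B⁻¹, Bz * (1+C)^2, inv_pos.2 hB, by positivity,
    fun h => ⟨(hupper h).1, hlower h, (hupper h).2⟩⟩, keysum⟩⟩

end
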